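/- Let ν ∈ B(K, K ⊗ h), Y self-adjoint on h, β > 0, and suppose there is an antiunitary operator ε on h such that ⟨φ ⊗ w, νψ⟩ = ⟨νφ, ψ ⊗ e^{-βY/2} ε w⟩ for all φ, ψ ∈ K and w ∈ h. Then Tr_h(ν A ν*) = ν*(A ⊗ e^{-βY})ν for all A ∈ B(K). -/

import Mathlib

open Matrix ComplexConjugate MeasureTheory
open scoped Kronecker ComplexOrder

noncomputable section

/-- Ampliation `Φ ⊗ id_k` of a superoperator, acting on `B(K ⊗ ℂᵏ)`. -/
def amp {n m k : Type*} [Fintype n] [Fintype m] [Fintype k]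
    (Φ : Matrix n n ℂ → Matrix m m ℂ) :
    Matrix (n × k) (n × k) ℂ → Matrix (m × k) (m × k) ℂ :=
  fun M => Matrix.of fun p q => Φ (Matrix.of fun a b => M (a, p.2) (b, q.2)) p.1 q.1

/-- A map between matrix algebras is positive if it preserves positive semidefiniteness. -/
def IsPosMap {n m : Type*} [Fintype n] [Fintype m]
    (Φ : Matrix n n ℂ → Matrix m m ℂ) : Prop :=
  ∀ A : Matrix n n ℂ, A.PosSemidef → (Φ A).PosSemidef

/-- Complete positivity: all ampliations `Φ ⊗ id_k` are positive. -/
def IsCP {n m : Type*} [Fintype n] [Fintype m]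
    (Φ : Matrix n n ℂ → Matrix m m ℂ) : Prop :=
  ∀ k : ℕ, IsPosMap (amp (k := Fin k) Φ)

/-- Action of a supermatrix (matrix on index `n × n`) as a linear map on `B(ℂⁿ)`. -/
def supAct {n : Type*} [Fintype n]
    (L : Matrix (n × n) (n × n) ℂ) (A : Matrix n n ℂ) : Matrix n n ℂ :=
  Matrix.of fun i j => ∑ p : n × n, L (i, j) p * A p.1 p.2

/-- The standard (antilinear in the first slot) inner product on `ι → ℂ`. -/
def cinner {ι : Type*} [Fintype ι] (v w : ι → ℂ) : ℂ := ∑ i, conj (v i) * w i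


lemma conj_cinner {ι : Type*} [Fintype ι] (v w : ι → ℂ) :
    conj (cinner v w) = cinner w v := by
  simp [cinner, map_sum, mul_comm]

lemma cinner_single {ι : Type*} [Fintype ι] [DecidableEq ι] (v : ι → ℂ) (a : ι) :
    cinner v (Pi.single a 1) = conj (v a) := by
  simp [cinner, Pi.single_apply, mul_ite]

lemma cinner_ext {ι : Type*} [Fintype ι] [DecidableEq ι] {v u : ι → ℂ}
    (h : ∀ w, cinner v w = cinner u w) : v = u := by
  funext a
  have := h (Pi.single a 1)
  rw [cinner_single, cinner_single] at this
  exact (starRingEnd ℂ).injective this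

lemma cinner_mulVec_right {ι : Type*} [Fintype ι] (M : Matrix ι ι ℂ) (v w : ι → ℂ) :
    cinner v (M.mulVec w) = cinner (Mᴴ.mulVec v) w := by
  simp only [cinner, Matrix.mulVec, dotProduct, Matrix.conjTranspose_apply,
    map_sum, _root_.map_mul, Complex.conj_conj, RCLike.star_def, Finset.mul_sum, Finset.sum_mul]
  rw [Finset.sum_comm]
  exact Finset.sum_congr rfl fun j _ => Finset.sum_congr rfl fun i _ => by ring

lemma sum3 {M : Type*} [AddCommMonoid M] {α β γ : Type*} [Fintype α] [Fintype β] [Fintype γ]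
    (g : α → β → γ → M) :
    ∑ a, ∑ b, ∑ c, g a b c = ∑ b, ∑ c, ∑ a, g a b c := by
  rw [Finset.sum_comm]
  exact Finset.sum_congr rfl fun b _ => Finset.sum_comm

lemma cinner_mulVec_left {ι : Type*} [Fintype ι] (M : Matrix ι ι ℂ) (v w : ι → ℂ) :
    cinner (M.mulVec v) w = cinner v (Mᴴ.mulVec w) := by
  rw [cinner_mulVec_right, Matrix.conjTranspose_conjTranspose]

/-- Elementary tensor of two vectors. -/
def tvec {n d : Type*} (φ : n → ℂ) (w : d → ℂ) : n × d → ℂ := fun p => φ p.1 * w p.2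

/-- Contraction `(φ| ⊗ 1 : K ⊗ h → h`. -/
def contrL {n d : Type*} [Fintype n] (φ : n → ℂ) (x : n × d → ℂ) : d → ℂ :=
  fun a => ∑ i, conj (φ i) * x (i, a)

/-- Partial trace over the second tensor factor. -/
def ptr {n d : Type*} [Fintype d] (M : Matrix (n × d) (n × d) ℂ) : Matrix n n ℂ :=
  Matrix.of fun i j => ∑ a, M (i, a) (j, a)

/-- If an antiunitary `ε` on `h` satisfies `⟨φ⊗w, νψ⟩ = ⟨νφ, ψ ⊗ e^{−βY/2} ε w⟩`, then
`Tr_h(ν A ν*) = ν*(A ⊗ e^{−βY})ν` for all `A`. -/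
theorem dbc_from_antiunitary {n d : ℕ} (β : ℝ) (hβ : 0 < β)
    (Y : Matrix (Fin d) (Fin d) ℂ) (hY : Y.IsHermitian)
    (ν : Matrix (Fin n × Fin d) (Fin n) ℂ)
    (ε : (Fin d → ℂ) → (Fin d → ℂ))
    (hadd : ∀ v w, ε (v + w) = ε v + ε w)
    (hsmul : ∀ (c : ℂ) v, ε (c • v) = conj c • ε v)
    (hinner : ∀ v w, cinner (ε v) (ε w) = cinner w v)
    (hsurj : Function.Surjective ε)
    (hrel : ∀ (φ ψ : Fin n → ℂ) (w : Fin d → ℂ),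
      cinner (tvec φ w) (ν.mulVec ψ)
        = cinner (ν.mulVec φ)
            (tvec ψ ((NormedSpace.exp ((-(β : ℂ) / 2) • Y)).mulVec (ε w)))) :
    ∀ A : Matrix (Fin n) (Fin n) ℂ,
      ptr (ν * A * νᴴ) = νᴴ * (A ⊗ₖ NormedSpace.exp ((-(β : ℂ)) • Y)) * ν := by
  set Eh := NormedSpace.exp ((-(β : ℂ) / 2) • Y) with hEhdef
  set E := NormedSpace.exp ((-(β : ℂ)) • Y) with hEdef
  have hEhH : Eh.IsHermitian := by
    refine Matrix.IsHermitian.exp ?_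
    unfold Matrix.IsHermitian
    rw [Matrix.conjTranspose_smul, hY.eq]
    congr 1
    simp [RCLike.star_def]
  have hEE : Eh * Eh = E := by
    rw [hEhdef, hEdef, ← Matrix.exp_add_of_commute _ _ (Commute.refl _)]
    congr 1
    rw [← add_smul]
    congr 1
    ring
  set f : Fin n → Fin n → (Fin d → ℂ) := fun i k a => ν (i, a) k with hfdef
  have key : ∀ (i k : Fin n) (w : Fin d → ℂ),
      cinner w (f i k) = cinner (f k i) (Eh.mulVec (ε w)) := by
    intro i k w
    have h := hrel (Pi.single i 1) (Pi.single k 1) w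
    have hL : cinner (tvec (Pi.single i 1) w) (ν.mulVec (Pi.single k 1))
        = cinner w (f i k) := by
      simp [cinner, tvec, Matrix.mulVec, dotProduct, Pi.single_apply,
        Fintype.sum_prod_type, apply_ite, mul_ite, ite_mul, hfdef]
    have hR : cinner (ν.mulVec (Pi.single i 1))
          (tvec (Pi.single k 1) (Eh.mulVec (ε w)))
        = cinner (f k i) (Eh.mulVec (ε w)) := by
      simp [cinner, tvec, Matrix.mulVec, dotProduct, Pi.single_apply,
        Fintype.sum_prod_type, apply_ite, mul_ite, ite_mul, hfdef]
    rw [hL, hR] at h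
    exact h
  have heps : ∀ (j l : Fin n), ε (f l j) = Eh.mulVec (f j l) := by
    intro j l
    obtain ⟨u, hu⟩ := hsurj (Eh.mulVec (f j l))
    have hflj : f l j = u := by
      apply cinner_ext
      intro w
      have h1 := key l j w
      have h2 := congrArg conj h1
      rw [conj_cinner, conj_cinner, cinner_mulVec_left, hEhH.eq, ← hu,
        hinner] at h2
      exact h2
    rw [hflj, hu]
  have main : ∀ (i j k l : Fin n),
      cinner (f j l) (f i k) = cinner (f k i) (E.mulVec (f l j)) := by
    intro i j k l
    rw [key i k (f j l)]
    have : ε (f j l) = Eh.mulVec (f l j) := heps l j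
    rw [this, Matrix.mulVec_mulVec, hEE]
  intro A
  ext i j
  have lhs : ptr (ν * A * νᴴ) i j
      = ∑ k, ∑ l, A k l * cinner (f j l) (f i k) := by
    simp only [ptr, Matrix.mul_apply, Matrix.conjTranspose_apply, Matrix.of_apply,
      cinner, hfdef, Finset.sum_mul, Finset.mul_sum]
    conv_lhs => rw [sum3]
    conv_lhs => rw [sum3]
    conv_lhs => enter [2, k]; rw [Finset.sum_comm]
    refine Finset.sum_congr rfl fun k _ => Finset.sum_congr rfl fun l _ =>
      Finset.sum_congr rfl fun a _ => ?_
    simp [RCLike.star_def]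
    ring
  have rhs : (νᴴ * (A ⊗ₖ E) * ν) i j
      = ∑ k, ∑ l, A k l * cinner (f k i) (E.mulVec (f l j)) := by
    simp only [Matrix.mul_apply, Matrix.kroneckerMap_apply, Matrix.conjTranspose_apply,
      Matrix.of_apply, cinner, hfdef, Matrix.mulVec, dotProduct,
      Fintype.sum_prod_type, Finset.sum_mul, Finset.mul_sum]
    conv_lhs => rw [sum3]
    conv_lhs => rw [sum3]
    conv_lhs => enter [2, k, 2, l]; rw [Finset.sum_comm]
    refine Finset.sum_congr rfl fun k _ => Finset.sum_congr rfl fun l _ =>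
      Finset.sum_congr rfl fun a _ => Finset.sum_congr rfl fun b _ => ?_
    simp [RCLike.star_def]
    ring
  rw [lhs, rhs]
  exact Finset.sum_congr rfl fun k _ => Finset.sum_congr rfl fun l _ => by
    rw [main i j k l]
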